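/- At the point (y,Z) = (1,Z̃) one has F(1,Z̃) = 0, ∂F/∂y(1,Z̃) = 0 and ∂F/∂Z(1,Z̃) = 0, and the second-order partial derivatives there are ∂²F/∂y²(1,Z̃) = -5/3, ∂²F/∂Z²(1,Z̃) = -(7/15)·Z̃^{-2} and ∂²F/∂y∂Z(1,Z̃) = (2/3)·Z̃^{-1}; the corresponding 2×2 Hessian matrix [[-5/3, (2/3)·Z̃^{-1}], [(2/3)·Z̃^{-1}, -(7/15)·Z̃^{-2}]] is negative definite, so F attains a strict local maximum, of value 0, at (1,Z̃). -/

import Mathlib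

/-- `P(Z) = Z` for `Z ≤ Z̃`, `P(Z) = (3/5)·Z^{5/3}·Z̃^{-2/3} + (2/5)·Z̃` for `Z > Z̃`. -/
noncomputable def Pfun (Zt Z : ℝ) : ℝ :=
  if Z ≤ Zt then Z else (3 / 5) * Z ^ ((5 : ℝ) / 3) * Zt ^ (-((2 : ℝ) / 3)) + (2 / 5) * Zt

/-- `S(Z) = 1 - log(Z/Z̃)` for `Z ≤ Z̃`, `S(Z) = Z̃/Z` for `Z > Z̃`. -/
noncomputable def Sfun (Zt Z : ℝ) : ℝ :=
  if Z ≤ Zt then 1 - Real.log (Z / Zt) else Zt / Z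

/-- The derivative of `S`: `S'(Z) = -1/Z` for `Z ≤ Z̃`, `S'(Z) = -Z̃/Z²` for `Z > Z̃`. -/
noncomputable def S'fun (Zt Z : ℝ) : ℝ :=
  if Z ≤ Zt then -1 / Z else -Zt / Z ^ 2

/-- `F(y,Z) = S(Z) - S(Z̃) + 5/2 - 1/y - (3/2)·(P(Z)/Z^{5/3})·y^{2/3}·Z̃^{2/3}
+ (1/10)·(S(Z) - S(Z̃))²`. -/
noncomputable def Ffun (Zt y Z : ℝ) : ℝ :=
  Sfun Zt Z - Sfun Zt Zt + 5 / 2 - 1 / y -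
    (3 / 2) * (Pfun Zt Z / Z ^ ((5 : ℝ) / 3)) * y ^ ((2 : ℝ) / 3) * Zt ^ ((2 : ℝ) / 3) +
    (1 / 10) * (Sfun Zt Z - Sfun Zt Zt) ^ 2

/-- The partial derivative `∂F/∂y(y,Z) = 1/y² - (P(Z)/Z^{5/3})·Z̃^{2/3}·y^{-1/3}`. -/
noncomputable def Fy (Zt y Z : ℝ) : ℝ :=
  1 / y ^ 2 - (Pfun Zt Z / Z ^ ((5 : ℝ) / 3)) * Zt ^ ((2 : ℝ) / 3) * y ^ (-((1 : ℝ) / 3))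

/-- The partial derivative
`∂F/∂Z(y,Z) = S'(Z)·(1 - y^{2/3}·(Z̃/Z)^{2/3} + (1/5)·(S(Z) - S(Z̃)))`. -/
noncomputable def FZ (Zt y Z : ℝ) : ℝ :=
  S'fun Zt Z * (1 - y ^ ((2 : ℝ) / 3) * (Zt / Z) ^ ((2 : ℝ) / 3) +
    (1 / 5) * (Sfun Zt Z - Sfun Zt Zt))

/-- At `(y,Z) = (1,Z̃)`: `F(1,Z̃) = 0`, `∂F/∂y(1,Z̃) = 0`, `∂F/∂Z(1,Z̃) = 0`, and the
second-order partial derivatives are `∂²F/∂y²(1,Z̃) = -5/3`,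
`∂²F/∂Z²(1,Z̃) = -(7/15)·Z̃⁻²` and `∂²F/∂y∂Z(1,Z̃) = (2/3)·Z̃⁻¹` (one-sided in `Z` from
the region `Z ≥ Z̃`); the Hessian matrix `[[-5/3, (2/3)/Z̃], [(2/3)/Z̃, -(7/15)/Z̃²]]` is
negative definite, so `F` attains a strict local maximum, of value `0`, at `(1,Z̃)`. -/
lemma rpadd (x:ℝ) (hx:0<x) (p q:ℝ) : x^p*x^q = x^(p+q) := (Real.rpow_add hx p q).symm

lemma Sfun_self {Zt : ℝ} (h : 0 < Zt) : Sfun Zt Zt = 1 := by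
  simp [Sfun, div_self h.ne']

lemma Pfun_self (Zt : ℝ) : Pfun Zt Zt = Zt := by simp [Pfun]

lemma Sfun_right {Zt Z : ℝ} (hZt : 0 < Zt) (hZ : Zt ≤ Z) : Sfun Zt Z = Zt / Z := by
  unfold Sfun
  by_cases h : Z ≤ Zt
  · have : Z = Zt := le_antisymm h hZ
    simp [this, div_self hZt.ne']
  · simp [h]

lemma S'fun_right {Zt Z : ℝ} (hZt : 0 < Zt) (hZ : Zt ≤ Z) : S'fun Zt Z = -Zt / Z^2 := by
  unfold S'fun
  by_cases h : Z ≤ Zt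
  · have : Z = Zt := le_antisymm h hZ
    rw [this]; rw [sq]; field_simp; simp [hZt.ne']
  · simp [h]

lemma Pfun_right {Zt Z : ℝ} (hZt : 0 < Zt) (hZ : Zt ≤ Z) :
    Pfun Zt Z = (3/5) * Z^((5:ℝ)/3) * Zt^(-((2:ℝ)/3)) + (2/5)*Zt := by
  unfold Pfun
  by_cases h : Z ≤ Zt
  · have hz : Z = Zt := le_antisymm h hZ
    subst hz
    rw [if_pos le_rfl, mul_assoc, rpadd _ hZt]
    norm_num
    ring
  · simp [h]

lemma Pfun_div {Zt Z : ℝ} (hZt : 0 < Zt) (hZ : Zt ≤ Z) :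
    Pfun Zt Z / Z^((5:ℝ)/3) = (3/5) * Zt^(-((2:ℝ)/3)) + (2/5)*Zt*Z^(-((5:ℝ)/3)) := by
  have hZ0 : 0 < Z := hZt.trans_le hZ
  have h53 : (0:ℝ) < Z^((5:ℝ)/3) := Real.rpow_pos_of_pos hZ0 _
  rw [Pfun_right hZt hZ, Real.rpow_neg hZ0.le]
  field_simp

lemma hasDerivAt_Ffun_y (Zt Z : ℝ) {y : ℝ} (hy : 0 < y) :
    HasDerivAt (fun y' => Ffun Zt y' Z) (Fy Zt y Z) y := by
  have h1 : HasDerivAt (fun y' : ℝ => 1/y') (-(y^2)⁻¹) y := by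
    simpa [one_div] using hasDerivAt_inv hy.ne'
  have h2 : HasDerivAt (fun y' : ℝ => y' ^ ((2:ℝ)/3)) ((2/3) * y ^ ((2:ℝ)/3 - 1)) y :=
    Real.hasDerivAt_rpow_const (Or.inl hy.ne')
  have h3 : HasDerivAt (fun y' => Ffun Zt y' Z)
      (0 - (-(y^2)⁻¹) - (3/2) * (Pfun Zt Z / Z ^ ((5:ℝ)/3)) * ((2/3) * y ^ ((2:ℝ)/3 - 1)) * Zt ^ ((2:ℝ)/3)) y := by
    unfold Ffun
    exact ((((hasDerivAt_const y _).sub h1).sub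
      ((h2.const_mul _).mul_const _)).add_const _)
  convert h3 using 1
  unfold Fy
  rw [show (2:ℝ)/3 - 1 = -((1:ℝ)/3) by norm_num]
  ring

lemma hasDerivWithinAt_Ffun_Z_left (Zt : ℝ) {y Z : ℝ} (hZt : 0 < Zt) (hy : 0 < y)
    (hZ0 : 0 < Z) (hZle : Z ≤ Zt) :
    HasDerivWithinAt (fun Z' => Ffun Zt y Z') (FZ Zt y Z) (Set.Iic Zt) Z := by
  set f₁ : ℝ → ℝ := fun Z' =>
    (1 - (Real.log Z' - Real.log Zt)) - 1 + 5/2 - 1/y -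
      3/2 * Z' ^ (-((2:ℝ)/3)) * y ^ ((2:ℝ)/3) * Zt ^ ((2:ℝ)/3) +
      1/10 * ((1 - (Real.log Z' - Real.log Zt)) - 1)^2 with hf₁
  have hlog : HasDerivAt (fun Z' : ℝ => (1:ℝ) - (Real.log Z' - Real.log Zt)) (-Z⁻¹) Z := by
    simpa using (((Real.hasDerivAt_log hZ0.ne').sub_const (Real.log Zt)).const_sub 1)
  have hrp : HasDerivAt (fun Z' : ℝ => Z' ^ (-((2:ℝ)/3))) ((-((2:ℝ)/3)) * Z ^ (-((2:ℝ)/3) - 1)) Z :=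
    Real.hasDerivAt_rpow_const (Or.inl hZ0.ne')
  have hD : HasDerivAt f₁
      ((-Z⁻¹) - 3/2 * ((-((2:ℝ)/3)) * Z ^ (-((2:ℝ)/3) - 1)) * y ^ ((2:ℝ)/3) * Zt ^ ((2:ℝ)/3)
        + 1/10 * ((2:ℕ) * ((1 - (Real.log Z - Real.log Zt)) - 1) ^ (2-1) * (-Z⁻¹))) Z := by
    rw [hf₁]
    exact ((((hlog.sub_const 1).add_const (5/2)).sub_const (1/y)).sub
      (((hrp.const_mul (3/2)).mul_const _).mul_const _)).add
      (((hlog.sub_const 1).pow 2).const_mul (1/10))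
  have heq : ∀ Z' : ℝ, 0 < Z' → Z' ≤ Zt → f₁ Z' = Ffun Zt y Z' := by
    intro Z' hZ' hle
    have hdiv : Z' / Z' ^ ((5:ℝ)/3) = Z' ^ (-((2:ℝ)/3)) := by
      have h := Real.rpow_sub hZ' 1 ((5:ℝ)/3)
      rw [Real.rpow_one] at h
      rw [← h]; norm_num
    rw [hf₁]
    unfold Ffun
    rw [Sfun_self hZt]
    simp only [Sfun, Pfun, if_pos hle, Real.log_div hZ'.ne' hZt.ne', hdiv]
  have heq' : f₁ Z = Ffun Zt y Z := heq Z hZ0 hZle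
  have hev : (fun Z' => Ffun Zt y Z') =ᶠ[nhdsWithin Z (Set.Iic Zt)] f₁ := by
    have hpos : ∀ᶠ Z' in nhdsWithin Z (Set.Iic Zt), 0 < Z' :=
      eventually_nhdsWithin_of_eventually_nhds (eventually_gt_nhds hZ0)
    filter_upwards [hpos, self_mem_nhdsWithin] with Z' h1 h2
    exact (heq Z' h1 h2).symm
  have hW : HasDerivWithinAt (fun Z' => Ffun Zt y Z') _ (Set.Iic Zt) Z :=
    (hD.hasDerivWithinAt).congr_of_eventuallyEq hev heq'.symm
  convert hW using 1
  unfold FZ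
  rw [Sfun_self hZt]
  unfold S'fun Sfun
  rw [if_pos hZle, if_pos hZle, Real.log_div hZ0.ne' hZt.ne']
  have e1 : Z ^ (-((2:ℝ)/3) - 1) = (Z * Z ^ ((2:ℝ)/3))⁻¹ := by
    rw [show Z * Z ^ ((2:ℝ)/3) = Z ^ ((1:ℝ)) * Z ^ ((2:ℝ)/3) by rw [Real.rpow_one],
      rpadd _ hZ0, ← Real.rpow_neg hZ0.le]
    norm_num
  have e2 : (Zt / Z) ^ ((2:ℝ)/3) = Zt ^ ((2:ℝ)/3) / Z ^ ((2:ℝ)/3) :=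
    Real.div_rpow hZt.le hZ0.le _
  rw [e1, e2]
  have hZ23 : (0:ℝ) < Z ^ ((2:ℝ)/3) := Real.rpow_pos_of_pos hZ0 _
  norm_num
  field_simp
  ring

lemma hasDerivWithinAt_Ffun_Z_right (Zt : ℝ) {y Z : ℝ} (hZt : 0 < Zt) (hy : 0 < y)
    (hZge : Zt ≤ Z) :
    HasDerivWithinAt (fun Z' => Ffun Zt y Z') (FZ Zt y Z) (Set.Ici Zt) Z := by
  have hZ0 : 0 < Z := hZt.trans_le hZge
  set f₂ : ℝ → ℝ := fun Z' =>
    Zt / Z' - 1 + 5/2 - 1/y -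
      3/2 * ((3/5) * Zt^(-((2:ℝ)/3)) + (2/5)*Zt*Z'^(-((5:ℝ)/3))) * y ^ ((2:ℝ)/3) * Zt ^ ((2:ℝ)/3) +
      1/10 * (Zt / Z' - 1)^2 with hf₂
  have hq0 : HasDerivAt (fun Z' : ℝ => Zt / Z') (-(Zt / Z^2)) Z := by
    simp only [div_eq_mul_inv]
    refine ((hasDerivAt_inv hZ0.ne').const_mul Zt).congr_deriv ?_
    ring
  have hrp : HasDerivAt (fun Z' : ℝ => Z' ^ (-((5:ℝ)/3))) ((-((5:ℝ)/3)) * Z ^ (-((5:ℝ)/3) - 1)) Z :=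
    Real.hasDerivAt_rpow_const (Or.inl hZ0.ne')
  have hD : HasDerivAt f₂
      ((-(Zt / Z^2)) - 3/2 * ((2/5)*Zt*((-((5:ℝ)/3)) * Z ^ (-((5:ℝ)/3) - 1))) * y ^ ((2:ℝ)/3) * Zt ^ ((2:ℝ)/3)
        + 1/10 * ((2:ℕ) * (Zt / Z - 1) ^ (2-1) * (-(Zt / Z^2)))) Z := by
    rw [hf₂]
    exact ((((hq0.sub_const 1).add_const (5/2)).sub_const (1/y)).sub
      (((((hrp.const_mul ((2/5)*Zt)).const_add ((3/5) * Zt^(-((2:ℝ)/3)))).const_mul (3/2)).mul_const _).mul_const _)).add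
      (((hq0.sub_const 1).pow 2).const_mul (1/10))
  have heq : ∀ Z' ∈ Set.Ici Zt, f₂ Z' = Ffun Zt y Z' := by
    intro Z' hle
    rw [hf₂]
    unfold Ffun
    rw [Sfun_self hZt, Sfun_right hZt hle, Pfun_div hZt hle]
  have hW : HasDerivWithinAt (fun Z' => Ffun Zt y Z') _ (Set.Ici Zt) Z :=
    (hD.hasDerivWithinAt).congr (fun x hx => (heq x hx).symm) (heq Z hZge).symm
  convert hW using 1
  unfold FZ
  rw [Sfun_self hZt, Sfun_right hZt hZge, S'fun_right hZt hZge]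
  have e1 : Z ^ (-((5:ℝ)/3) - 1) = (Z^2 * Z ^ ((2:ℝ)/3))⁻¹ := by
    rw [show (Z:ℝ)^2 = Z ^ ((2:ℝ)) by rw [← Real.rpow_natCast Z 2]; norm_num,
      rpadd _ hZ0, ← Real.rpow_neg hZ0.le]
    norm_num
  have e2 : (Zt / Z) ^ ((2:ℝ)/3) = Zt ^ ((2:ℝ)/3) / Z ^ ((2:ℝ)/3) :=
    Real.div_rpow hZt.le hZ0.le _
  rw [e1, e2]
  have hZ23 : (0:ℝ) < Z ^ ((2:ℝ)/3) := Real.rpow_pos_of_pos hZ0 _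
  norm_num
  field_simp
  ring

set_option maxHeartbeats 1000000 in
lemma key_poly (u v : ℝ) (hu : |u| ≤ 1/10000) (hv : |v| ≤ 1/10000) :
    (1/10)*(u^2+v^2) ≤
    1 + (9/10)*(1+u)^5 + (3/5)*(1+u)^5*(1+v)^5 - (1+u)^3*((1+v)^3-1)
      - (5/2)*(1+u)^3 - (1/10)*(1+u)^3*((1+v)^3-1)^2 := by
  set m := max |u| |v| with hm
  have hum : |u| ≤ m := le_max_left _ _
  have hvm : |v| ≤ m := le_max_right _ _
  have hm0 : 0 ≤ m := le_trans (abs_nonneg u) hum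
  have hmd : m ≤ 1/10000 := max_le hu hv
  have hm1 : m ≤ 1 := hmd.trans (by norm_num)
  have hmsq : m^2 ≤ u^2 + v^2 := by
    rcases max_cases |u| |v| with ⟨h1, _⟩ | ⟨h1, _⟩ <;> rw [hm, h1] <;> rw [sq_abs] <;> nlinarith [sq_nonneg u, sq_nonneg v]
  have key3 : ∀ i j : ℕ, 3 ≤ i + j → |u^i * v^j| ≤ (1/10000) * m^2 := by
    intro i j hij
    have h1 : |u^i * v^j| = |u|^i * |v|^j := by rw [abs_mul, abs_pow, abs_pow]
    have h2 : |u|^i * |v|^j ≤ m^i * m^j :=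
      mul_le_mul (pow_le_pow_left₀ (abs_nonneg u) hum i) (pow_le_pow_left₀ (abs_nonneg v) hvm j)
        (pow_nonneg (abs_nonneg v) j) (pow_nonneg hm0 i)
    have h3 : m^i * m^j = m^(i+j) := (pow_add m i j).symm
    have h4 : m^(i+j) ≤ m^3 := pow_le_pow_of_le_one hm0 hm1 hij
    have h5 : m^3 ≤ (1/10000) * m^2 := by nlinarith [sq_nonneg m]
    calc |u^i * v^j| = |u|^i * |v|^j := h1
      _ ≤ m^i * m^j := h2
      _ = m^(i+j) := h3
      _ ≤ m^3 := h4
      _ ≤ (1/10000) * m^2 := h5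
  have h03 := abs_le.mp (key3 0 3 (by norm_num))
  have h04 := abs_le.mp (key3 0 4 (by norm_num))
  have h06 := abs_le.mp (key3 0 6 (by norm_num))
  have h12 := abs_le.mp (key3 1 2 (by norm_num))
  have h13 := abs_le.mp (key3 1 3 (by norm_num))
  have h14 := abs_le.mp (key3 1 4 (by norm_num))
  have h15 := abs_le.mp (key3 1 5 (by norm_num))
  have h16 := abs_le.mp (key3 1 6 (by norm_num))
  have h21 := abs_le.mp (key3 2 1 (by norm_num))
  have h22 := abs_le.mp (key3 2 2 (by norm_num))
  have h23 := abs_le.mp (key3 2 3 (by norm_num))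
  have h24 := abs_le.mp (key3 2 4 (by norm_num))
  have h25 := abs_le.mp (key3 2 5 (by norm_num))
  have h26 := abs_le.mp (key3 2 6 (by norm_num))
  have h30 := abs_le.mp (key3 3 0 (by norm_num))
  have h31 := abs_le.mp (key3 3 1 (by norm_num))
  have h32 := abs_le.mp (key3 3 2 (by norm_num))
  have h33 := abs_le.mp (key3 3 3 (by norm_num))
  have h34 := abs_le.mp (key3 3 4 (by norm_num))
  have h35 := abs_le.mp (key3 3 5 (by norm_num))
  have h36 := abs_le.mp (key3 3 6 (by norm_num))
  have h40 := abs_le.mp (key3 4 0 (by norm_num))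
  have h41 := abs_le.mp (key3 4 1 (by norm_num))
  have h42 := abs_le.mp (key3 4 2 (by norm_num))
  have h43 := abs_le.mp (key3 4 3 (by norm_num))
  have h44 := abs_le.mp (key3 4 4 (by norm_num))
  have h45 := abs_le.mp (key3 4 5 (by norm_num))
  have h50 := abs_le.mp (key3 5 0 (by norm_num))
  have h51 := abs_le.mp (key3 5 1 (by norm_num))
  have h52 := abs_le.mp (key3 5 2 (by norm_num))
  have h53 := abs_le.mp (key3 5 3 (by norm_num))
  have h54 := abs_le.mp (key3 5 4 (by norm_num))
  have h55 := abs_le.mp (key3 5 5 (by norm_num))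
  linarith [sq_nonneg (15*u + 7*v), sq_nonneg u, sq_nonneg v, hmsq, h03.1, h03.2, h04.1, h04.2, h06.1, h06.2, h12.1, h12.2, h13.1, h13.2, h14.1, h14.2, h15.1, h15.2, h16.1, h16.2, h21.1, h21.2, h22.1, h22.2, h23.1, h23.2, h24.1, h24.2, h25.1, h25.2, h26.1, h26.2, h30.1, h30.2, h31.1, h31.2, h32.1, h32.2, h33.1, h33.2, h34.1, h34.2, h35.1, h35.2, h36.1, h36.2, h40.1, h40.2, h41.1, h41.2, h42.1, h42.2, h43.1, h43.2, h44.1, h44.2, h45.1, h45.2, h50.1, h50.2, h51.1, h51.2, h52.1, h52.2, h53.1, h53.2, h54.1, h54.2, h55.1, h55.2]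

lemma key1 {Zt : ℝ} (hZt : 0 < Zt) : Zt / Zt ^ ((5:ℝ)/3) * Zt ^ ((2:ℝ)/3) = 1 := by
  rw [div_mul_eq_mul_div]
  rw [show Zt * Zt ^ ((2:ℝ)/3) = Zt ^ ((5:ℝ)/3) by
    nth_rewrite 1 [← Real.rpow_one Zt]
    rw [rpadd _ hZt]; norm_num]
  exact div_self (Real.rpow_pos_of_pos hZt _).ne'

lemma Ffun_zero {Zt : ℝ} (hZt : 0 < Zt) : Ffun Zt 1 Zt = 0 := by
  unfold Ffun
  rw [Sfun_self hZt, Pfun_self, Real.one_rpow]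
  linear_combination (-3/2) * key1 hZt

lemma Fy_zero {Zt : ℝ} (hZt : 0 < Zt) : Fy Zt 1 Zt = 0 := by
  unfold Fy
  rw [Pfun_self, Real.one_rpow]
  linear_combination (-1) * key1 hZt

lemma FZ_zero {Zt : ℝ} (hZt : 0 < Zt) : FZ Zt 1 Zt = 0 := by
  unfold FZ
  rw [Sfun_self hZt, Real.one_rpow, div_self hZt.ne', Real.one_rpow]
  ring

lemma Fyy {Zt : ℝ} (hZt : 0 < Zt) : HasDerivAt (fun y => Fy Zt y Zt) (-(5/3)) 1 := by
  have hA : HasDerivAt (fun y : ℝ => Fy Zt y Zt)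
      (-(2 * (1:ℝ)^1) / ((1:ℝ)^2)^2 -
        (Pfun Zt Zt / Zt ^ ((5:ℝ)/3)) * Zt ^ ((2:ℝ)/3) * ((-((1:ℝ)/3)) * (1:ℝ) ^ (-((1:ℝ)/3) - 1))) 1 := by
    unfold Fy
    simp only [one_div]
    exact ((hasDerivAt_pow 2 (1:ℝ)).inv (by norm_num)).sub
      (((Real.hasDerivAt_rpow_const (Or.inl one_ne_zero))).const_mul _)
  convert hA using 1
  rw [Pfun_self, Real.one_rpow]
  have h := key1 hZt
  rw [div_mul_eq_mul_div] at h ⊢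
  norm_num
  linarith [h]

lemma FZZ {Zt : ℝ} (hZt : 0 < Zt) :
    HasDerivWithinAt (fun Z => FZ Zt 1 Z) (-(7/15) / Zt^2) (Set.Ici Zt) Zt := by
  set G : ℝ → ℝ := fun Z' =>
    (-Zt / Z'^2) * (1 - Zt ^ ((2:ℝ)/3) * Z' ^ (-((2:ℝ)/3)) + (1/5) * (Zt/Z' - 1)) with hG
  have heq : ∀ Z' ∈ Set.Ici Zt, FZ Zt 1 Z' = G Z' := by
    intro Z' hle
    have hZ' : 0 < Z' := hZt.trans_le hle
    show FZ Zt 1 Z' = -Zt / Z'^2 * (1 - Zt ^ ((2:ℝ)/3) * Z' ^ (-((2:ℝ)/3)) + (1/5) * (Zt/Z' - 1))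
    unfold FZ
    rw [S'fun_right hZt hle, Sfun_right hZt hle, Sfun_self hZt, Real.one_rpow,
      Real.div_rpow hZt.le hZ'.le, Real.rpow_neg hZ'.le]
    ring
  have hu : HasDerivAt (fun Z' : ℝ => -Zt / Z'^2)
      ((0 * Zt^2 - (-Zt) * (2 * Zt^1)) / (Zt^2)^2) Zt :=
    (hasDerivAt_const Zt (-Zt)).div (hasDerivAt_pow 2 Zt) (pow_ne_zero 2 hZt.ne')
  have hrp : HasDerivAt (fun Z' : ℝ => Z' ^ (-((2:ℝ)/3)))
      ((-((2:ℝ)/3)) * Zt ^ (-((2:ℝ)/3) - 1)) Zt :=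
    Real.hasDerivAt_rpow_const (Or.inl hZt.ne')
  have hq : HasDerivAt (fun Z' : ℝ => Zt / Z') ((0 * Zt - Zt * 1) / Zt^2) Zt :=
    (hasDerivAt_const Zt Zt).div (hasDerivAt_id Zt) hZt.ne'
  have hv := ((hrp.const_mul (Zt ^ ((2:ℝ)/3))).const_sub 1).add ((hq.sub_const 1).const_mul (1/5))
  have hD := hu.mul hv
  have hW := (hD.hasDerivWithinAt).congr heq (heq Zt Set.self_mem_Ici)
  refine hW.congr_deriv ?_
  have e0 : Zt ^ (-((2:ℝ)/3)) = (Zt ^ ((2:ℝ)/3))⁻¹ := Real.rpow_neg hZt.le _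
  have e1 : Zt ^ (-((2:ℝ)/3) - 1) = (Zt * Zt ^ ((2:ℝ)/3))⁻¹ := by
    rw [show Zt * Zt ^ ((2:ℝ)/3) = Zt ^ ((1:ℝ)) * Zt ^ ((2:ℝ)/3) by rw [Real.rpow_one],
      rpadd _ hZt, ← Real.rpow_neg hZt.le]
    norm_num
  simp only [Pi.add_apply]
  rw [e0, e1]
  have h23 : (0:ℝ) < Zt ^ ((2:ℝ)/3) := Real.rpow_pos_of_pos hZt _
  field_simp
  ring

lemma FyZ {Zt : ℝ} (hZt : 0 < Zt) :
    HasDerivWithinAt (fun Z => Fy Zt 1 Z) ((2/3) / Zt) (Set.Ici Zt) Zt := by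
  set H : ℝ → ℝ := fun Z' =>
    1 / (1:ℝ)^2 - ((3/5) * Zt^(-((2:ℝ)/3)) + (2/5)*Zt*Z'^(-((5:ℝ)/3))) * Zt ^ ((2:ℝ)/3) * (1:ℝ) ^ (-((1:ℝ)/3)) with hH
  have heq : ∀ Z' ∈ Set.Ici Zt, Fy Zt 1 Z' = H Z' := by
    intro Z' hle
    show Fy Zt 1 Z' = 1 / (1:ℝ)^2 - ((3/5) * Zt^(-((2:ℝ)/3)) + (2/5)*Zt*Z'^(-((5:ℝ)/3))) * Zt ^ ((2:ℝ)/3) * (1:ℝ) ^ (-((1:ℝ)/3))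
    unfold Fy
    rw [Pfun_div hZt hle]
  have hrp : HasDerivAt (fun Z' : ℝ => Z' ^ (-((5:ℝ)/3)))
      ((-((5:ℝ)/3)) * Zt ^ (-((5:ℝ)/3) - 1)) Zt :=
    Real.hasDerivAt_rpow_const (Or.inl hZt.ne')
  have hD := ((((hrp.const_mul ((2/5)*Zt)).const_add ((3/5) * Zt^(-((2:ℝ)/3)))).mul_const
      (Zt ^ ((2:ℝ)/3))).mul_const ((1:ℝ) ^ (-((1:ℝ)/3)))).const_sub (1 / (1:ℝ)^2)
  have hW := (hD.hasDerivWithinAt).congr heq (heq Zt Set.self_mem_Ici)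
  refine hW.congr_deriv ?_
  have e1 : Zt ^ (-((5:ℝ)/3) - 1) = (Zt^2 * Zt ^ ((2:ℝ)/3))⁻¹ := by
    rw [show (Zt:ℝ)^2 = Zt ^ ((2:ℝ)) by rw [← Real.rpow_natCast Zt 2]; norm_num,
      rpadd _ hZt, ← Real.rpow_neg hZt.le]
    norm_num
  rw [Real.one_rpow, e1]
  have h23 : (0:ℝ) < Zt ^ ((2:ℝ)/3) := Real.rpow_pos_of_pos hZt _
  field_simp

lemma abs_sub_one_le_cube {x : ℝ} (hx : 0 ≤ x) : |x - 1| ≤ |x^3 - 1| := by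
  rcases le_total 1 x with h | h
  · have k1 : 0 ≤ (x - 1) * x := mul_nonneg (by linarith) hx
    have k2 : 0 ≤ (x - 1) * x * x := mul_nonneg k1 hx
    have h3 : x - 1 ≤ x^3 - 1 := by nlinarith
    rw [abs_of_nonneg (by linarith), abs_of_nonneg (by linarith)]
    exact h3
  · have k1 : 0 ≤ (1 - x) * x := mul_nonneg (by linarith) hx
    have k2 : 0 ≤ (1 - x) * x * x := mul_nonneg k1 hx
    have h3 : x^3 - 1 ≤ x - 1 := by nlinarith
    rw [abs_of_nonpos (by linarith), abs_of_nonpos (by linarith)]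
    linarith

lemma rpow_third_pow {x : ℝ} (hx : 0 ≤ x) (n : ℕ) :
    (x ^ ((1:ℝ)/3)) ^ n = x ^ ((n:ℝ)/3) := by
  rw [← Real.rpow_natCast (x ^ ((1:ℝ)/3)) n, ← Real.rpow_mul hx]
  congr 1
  ring

set_option maxHeartbeats 1000000 in
lemma max_part {Zt : ℝ} (hZt : 0 < Zt) :
    ∃ ε > 0, ∀ y Z : ℝ, 0 < y → Zt ≤ Z → |y - 1| < ε → |Z - Zt| < ε →
      (y, Z) ≠ (1, Zt) → Ffun Zt y Z < Ffun Zt 1 Zt := by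
  refine ⟨min (1/10000) (Zt/10000), by positivity, ?_⟩
  intro y Z hy hZZt hyε hZε hne
  rw [Ffun_zero hZt]
  have hZ0 : 0 < Z := hZt.trans_le hZZt
  have hs0 : 0 < Zt/Z := by positivity
  set a := y ^ ((1:ℝ)/3) with hadef
  set b := (Zt/Z) ^ ((1:ℝ)/3) with hbdef
  have ha0 : 0 < a := Real.rpow_pos_of_pos hy _
  have hb0 : 0 < b := Real.rpow_pos_of_pos hs0 _
  have ha3 : a ^ 3 = y := by
    have := rpow_third_pow hy.le 3
    norm_num at this
    exact this
  have ha2 : a ^ 2 = y ^ ((2:ℝ)/3) := by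
    have := rpow_third_pow hy.le 2
    norm_num at this
    exact this
  have hb3 : b ^ 3 = Zt / Z := by
    have := rpow_third_pow hs0.le 3
    norm_num at this
    exact this
  have hb5 : b ^ 5 = (Zt/Z) ^ ((5:ℝ)/3) := by
    have := rpow_third_pow hs0.le 5
    norm_num at this
    exact this
  -- rpow bookkeeping
  have h1 : Zt ^ (-((2:ℝ)/3)) * Zt ^ ((2:ℝ)/3) = 1 := by
    rw [rpadd _ hZt]; norm_num
  have h2 : Zt * Z ^ (-((5:ℝ)/3)) * Zt ^ ((2:ℝ)/3) = b ^ 5 := by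
    rw [hb5, Real.div_rpow hZt.le hZ0.le, Real.rpow_neg hZ0.le,
      show Zt * (Z ^ ((5:ℝ)/3))⁻¹ * Zt ^ ((2:ℝ)/3) = (Zt * Zt ^ ((2:ℝ)/3)) * (Z ^ ((5:ℝ)/3))⁻¹ by ring,
      show Zt * Zt ^ ((2:ℝ)/3) = Zt ^ ((5:ℝ)/3) by
        nth_rewrite 1 [← Real.rpow_one Zt]; rw [rpadd _ hZt]; norm_num]
    ring
  have hrepr : Ffun Zt y Z =
      (b^3 - 1) + 5/2 - 1/a^3 - 3/2*(3/5 + (2/5)*b^5)*a^2 + (1/10)*(b^3-1)^2 := by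
    unfold Ffun
    rw [Sfun_self hZt, Sfun_right hZt hZZt, Pfun_div hZt hZZt, ← ha2, ← ha3, ← hb3]
    linear_combination (-(9/10)*a^2) * h1 + (-(3/5)*a^2) * h2
  -- closeness bounds
  have hyb : |y - 1| < 1/10000 := lt_of_lt_of_le hyε (min_le_left _ _)
  have hu' : |a - 1| ≤ 1/10000 := by
    have h := abs_sub_one_le_cube ha0.le
    rw [ha3] at h
    linarith
  have hv' : |b - 1| ≤ 1/10000 := by
    have h := abs_sub_one_le_cube hb0.le
    rw [hb3] at h
    have e : Zt/Z - 1 = -((Z - Zt)/Z) := by field_simp; ring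
    have hZsub : 0 ≤ Z - Zt := by linarith
    have e2 : |Zt/Z - 1| = (Z - Zt)/Z := by
      rw [e, abs_neg, abs_of_nonneg (div_nonneg hZsub hZ0.le)]
    have e3 : (Z - Zt)/Z ≤ (Z - Zt)/Zt := by gcongr
    have e4 : (Z - Zt)/Zt < (Zt/10000)/Zt := by
      gcongr
      calc Z - Zt ≤ |Z - Zt| := le_abs_self _
        _ < min (1/10000) (Zt/10000) := hZε
        _ ≤ Zt/10000 := min_le_right _ _
    have e5 : (Zt/10000)/Zt = 1/10000 := by field_simp
    rw [e2] at h
    linarith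
  have hK := key_poly (a-1) (b-1) hu' hv'
  have hone : ∀ t : ℝ, (1:ℝ) + (t - 1) = t := fun t => by ring
  rw [hone a, hone b] at hK
  have hposq : 0 < (a-1)^2 + (b-1)^2 := by
    rcases eq_or_ne a 1 with ha1 | ha1
    · have hb1 : b ≠ 1 := by
        intro hb1
        apply hne
        have hy1 : y = 1 := by rw [← ha3, ha1]; norm_num
        have hZ1 : Z = Zt := by
          have hq : Zt / Z = 1 := by rw [← hb3, hb1]; norm_num
          field_simp at hq
          linarith
        rw [hy1, hZ1]
      have h0 : b - 1 ≠ 0 := sub_ne_zero.2 hb1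
      have hb2' : 0 < |b - 1| := abs_pos.mpr h0
      nlinarith [sq_abs (b-1), sq_nonneg (a-1)]
    · have h0 : a - 1 ≠ 0 := sub_ne_zero.2 ha1
      have ha2' : 0 < |a - 1| := abs_pos.mpr h0
      nlinarith [sq_abs (a-1), sq_nonneg (b-1)]
  have hK0 : 0 < 1 + (9/10)*a^5 + (3/5)*a^5*b^5 - a^3*(b^3-1) - (5/2)*a^3 - (1/10)*a^3*(b^3-1)^2 := by
    nlinarith
  have hmul : Ffun Zt y Z * a^3 =
      -(1 + (9/10)*a^5 + (3/5)*a^5*b^5 - a^3*(b^3-1) - (5/2)*a^3 - (1/10)*a^3*(b^3-1)^2) := by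
    have hinv : 1/a^3 * a^3 = 1 := one_div_mul_cancel (pow_ne_zero 3 ha0.ne')
    rw [hrepr]
    linear_combination (-1) * hinv
  have ha3pos : 0 < a^3 := pow_pos ha0 3
  by_contra hcon
  push_neg at hcon
  have : (0:ℝ) ≤ Ffun Zt y Z * a^3 := mul_nonneg hcon ha3pos.le
  rw [hmul] at this
  linarith

lemma hasDerivAt_Ffun_Z (Zt : ℝ) {y Z : ℝ} (hZt : 0 < Zt) (hy : 0 < y) (hZ0 : 0 < Z) :
    HasDerivAt (fun Z' => Ffun Zt y Z') (FZ Zt y Z) Z := by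
  rcases lt_trichotomy Z Zt with h | h | h
  · exact (hasDerivWithinAt_Ffun_Z_left Zt hZt hy hZ0 h.le).hasDerivAt (Iic_mem_nhds h)
  · rw [h]
    have h1 := hasDerivWithinAt_Ffun_Z_left Zt hZt hy hZt le_rfl
    have h2 := hasDerivWithinAt_Ffun_Z_right Zt hZt hy le_rfl
    have h3 := h1.union h2
    rw [Set.Iic_union_Ici] at h3
    exact hasDerivWithinAt_univ.mp h3
  · exact (hasDerivWithinAt_Ffun_Z_right Zt hZt hy h.le).hasDerivAt (Ici_mem_nhds h)

lemma hess_neg {Zt : ℝ} (hZt : 0 < Zt) :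
    ∀ v : Fin 2 → ℝ, v ≠ 0 →
      dotProduct v
        ((!![-(5 / 3), (2 / 3) / Zt; (2 / 3) / Zt, -(7 / 15) / Zt ^ 2] :
          Matrix (Fin 2) (Fin 2) ℝ).mulVec v) < 0 := by
  intro v hv
  have h01 : v 0 ≠ 0 ∨ v 1 ≠ 0 := by
    by_contra h
    push_neg at h
    exact hv (funext fun i => by fin_cases i <;> simp [h.1, h.2])
  have e : dotProduct v
      ((!![-(5 / 3), (2 / 3) / Zt; (2 / 3) / Zt, -(7 / 15) / Zt ^ 2] :
        Matrix (Fin 2) (Fin 2) ℝ).mulVec v) =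
      v 0 * (-(5/3) * v 0 + (2/3)/Zt * v 1) + v 1 * ((2/3)/Zt * v 0 + (-(7/15)/Zt^2) * v 1) := by
    simp [dotProduct, Matrix.mulVec, Fin.sum_univ_two]
  have h2 : v 0 * (-(5/3) * v 0 + (2/3)/Zt * v 1) + v 1 * ((2/3)/Zt * v 0 + (-(7/15)/Zt^2) * v 1)
      = -(1/(15*Zt^2)) * ((5*Zt*(v 0) - 2*(v 1))^2 + 3*(v 1)^2) := by
    field_simp
    ring
  have hS : 0 < (5*Zt*(v 0) - 2*(v 1))^2 + 3*(v 1)^2 := by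
    rcases eq_or_ne (v 1) 0 with h1 | h1
    · rcases h01 with h0 | h0
      · have hne : 5*Zt*(v 0) - 2*(v 1) ≠ 0 := by
          rw [h1]
          have : (5:ℝ)*Zt*(v 0) ≠ 0 := mul_ne_zero (mul_ne_zero (by norm_num) hZt.ne') h0
          simpa using this
        have := abs_pos.mpr hne
        nlinarith [sq_abs (5*Zt*(v 0) - 2*(v 1)), sq_nonneg (v 1)]
      · exact absurd h1 h0
    · have := abs_pos.mpr h1
      nlinarith [sq_nonneg (5*Zt*(v 0) - 2*(v 1)), sq_abs (v 1)]
  rw [e, h2]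
  have hc : 0 < 1/(15*Zt^2) := by positivity
  nlinarith [mul_pos hc hS]

theorem stmt10 (Zt : ℝ) (hZt : 0 < Zt) :
    Ffun Zt 1 Zt = 0 ∧
    (∀ y Z : ℝ, 0 < y → 0 < Z →
      HasDerivAt (fun y' => Ffun Zt y' Z) (Fy Zt y Z) y ∧
      HasDerivAt (fun Z' => Ffun Zt y Z') (FZ Zt y Z) Z) ∧
    Fy Zt 1 Zt = 0 ∧
    FZ Zt 1 Zt = 0 ∧
    HasDerivAt (fun y => Fy Zt y Zt) (-(5 / 3)) 1 ∧
    HasDerivWithinAt (fun Z => FZ Zt 1 Z) (-(7 / 15) / Zt ^ 2) (Set.Ici Zt) Zt ∧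
    HasDerivWithinAt (fun Z => Fy Zt 1 Z) ((2 / 3) / Zt) (Set.Ici Zt) Zt ∧
    (∀ v : Fin 2 → ℝ, v ≠ 0 →
      dotProduct v
        ((!![-(5 / 3), (2 / 3) / Zt; (2 / 3) / Zt, -(7 / 15) / Zt ^ 2] :
          Matrix (Fin 2) (Fin 2) ℝ).mulVec v) < 0) ∧
    (∃ ε > 0, ∀ y Z : ℝ, 0 < y → Zt ≤ Z → |y - 1| < ε → |Z - Zt| < ε →
      (y, Z) ≠ (1, Zt) → Ffun Zt y Z < Ffun Zt 1 Zt) := by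
  exact ⟨Ffun_zero hZt,
    fun y Z hy hZ0 => ⟨hasDerivAt_Ffun_y Zt Z hy, hasDerivAt_Ffun_Z Zt hZt hy hZ0⟩,
    Fy_zero hZt, FZ_zero hZt, Fyy hZt, FZZ hZt, FyZ hZt, hess_neg hZt, max_part hZt⟩
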